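/- Let ℓ₁,…,ℓₙ be nonnegative reals with n ≥ 2 and sum L. The unbiased sample variance TSI = (1/(n-1))·(Σᵢ ℓᵢ² − L²/n) equals L²/n if and only if, up to permutation, exactly one ℓⱼ equals L and all other ℓᵢ are zero. -/

import Mathlib

open Finset

theorem tsi_eq_max_iff (n : ℕ) (hn : 2 ≤ n) (ℓ : Fin n → ℝ)
    (hℓ : ∀ i, 0 ≤ ℓ i) :
    (1 / ((n : ℝ) - 1)) * (∑ i, ℓ i ^ 2 - (∑ i, ℓ i) ^ 2 / n) = (∑ i, ℓ i) ^ 2 / n ↔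
      ∃ j, ℓ j = (∑ i, ℓ i) ∧ ∀ i, i ≠ j → ℓ i = 0 := by
  have h2 : (2:ℝ) ≤ n := by exact_mod_cast hn
  have hne : (n : ℝ) - 1 ≠ 0 := by linarith
  have hn0 : (n : ℝ) ≠ 0 := by linarith
  constructor
  · intro h
    have hsq : ∑ i, ℓ i ^ 2 = (∑ i, ℓ i) ^ 2 := by
      field_simp at h
      have key : (∑ i, ℓ i ^ 2) * ((n:ℝ) * n) = ((∑ i, ℓ i) ^ 2) * ((n:ℝ) * n) := by
        ring_nf at h ⊢; linear_combination (n:ℝ) * h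
      exact mul_right_cancel₀ (by positivity) key
    -- cross terms vanish
    have hexp : (∑ i, ℓ i) ^ 2 =
        ∑ i, (ℓ i ^ 2 + ∑ j ∈ univ.erase i, ℓ i * ℓ j) := by
      rw [sq, Finset.sum_mul_sum]
      refine Finset.sum_congr rfl fun i _ => ?_
      rw [← Finset.add_sum_erase _ _ (Finset.mem_univ i), sq]
    have hcross : ∑ i, ∑ j ∈ univ.erase i, ℓ i * ℓ j = 0 := by
      rw [Finset.sum_add_distrib] at hexp
      linarith [hsq, hexp]
    have hpairs : ∀ i j : Fin n, j ≠ i → ℓ i * ℓ j = 0 := by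
      have h1 := (Finset.sum_eq_zero_iff_of_nonneg (fun i _ =>
        Finset.sum_nonneg fun j _ => mul_nonneg (hℓ i) (hℓ j))).mp hcross
      intro i j hji
      have h2' := (Finset.sum_eq_zero_iff_of_nonneg (fun j _ =>
        mul_nonneg (hℓ i) (hℓ j))).mp (h1 i (Finset.mem_univ i))
      exact h2' j (Finset.mem_erase.mpr ⟨hji, Finset.mem_univ j⟩)
    by_cases hall : ∀ i, ℓ i = 0
    · refine ⟨⟨0, by omega⟩, ?_, fun i _ => hall i⟩
      rw [hall, Finset.sum_eq_zero fun i _ => hall i]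
    · push_neg at hall
      obtain ⟨j, hj⟩ := hall
      have hz : ∀ i, i ≠ j → ℓ i = 0 := by
        intro i hij
        rcases mul_eq_zero.mp (hpairs j i hij) with h | h
        · exact absurd h hj
        · exact h
      refine ⟨j, ?_, hz⟩
      rw [Finset.sum_eq_single j (fun i _ hij => hz i hij) (fun h => absurd (Finset.mem_univ j) h)]
  · rintro ⟨j, hj, hz⟩
    have hsum : ∑ i, ℓ i = ℓ j :=
      Finset.sum_eq_single j (fun i _ hij => hz i hij) (fun h => absurd (Finset.mem_univ j) h)
    have hsq : ∑ i, ℓ i ^ 2 = ℓ j ^ 2 :=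
      Finset.sum_eq_single j (fun i _ hij => by rw [hz i hij]; ring)
        (fun h => absurd (Finset.mem_univ j) h)
    rw [hsum, hsq]
    field_simp
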